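/- For all integers 1 ≤ p, q ≤ N, if ṽ ∈ ℝ^q satisfies S(p,q) ṽ = λ ṽ for some λ ∈ ℝ, then the vector v ∈ ℂ^q with entries v_k = exp(iπ(k-1)(p-1)/N) ṽ_k for 1 ≤ k ≤ q satisfies A* A v = λ v. Hence, after normalization, v is a right singular vector of A with singular value √λ. -/
import Mathlib


open Matrix Complex

/-- The twiddle factor `ω = exp(2πi/N)`. -/
noncomputable def omegaN (N : ℕ) : ℂ := Complex.exp (2 * Real.pi * Complex.I / N)

/-- The `p × q` Fourier submatrix `A` with entries `A_{j,k} = ω^{-(j-1)(k-1)}`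
(indices here are 0-based). -/
noncomputable def fourierA (N p q : ℕ) : Matrix (Fin p) (Fin q) ℂ :=
  fun j k => omegaN N ^ (-(((j : ℕ) * (k : ℕ) : ℕ) : ℤ))

/-- The periodic prolate matrix `S(p,q) ∈ ℝ^{q×q}` with entries
`sin(pπ(j-k)/N)/sin(π(j-k)/N)` off the diagonal and `p` on the diagonal. -/
noncomputable def prolateS (N p q : ℕ) : Matrix (Fin q) (Fin q) ℝ :=
  fun j k => if j = k then (p : ℝ)
    else Real.sin ((p : ℝ) * Real.pi * (((j : ℕ) : ℝ) - ((k : ℕ) : ℝ)) / N) /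
         Real.sin (Real.pi * (((j : ℕ) : ℝ) - ((k : ℕ) : ℝ)) / N)

lemma exp_two_sub_one (w : ℂ) :
    Complex.exp (2*Complex.I*w) - 1 = Complex.exp (Complex.I*w) * (2*Complex.I*Complex.sin w) := by
  rw [Complex.sin]
  have h1 : Complex.exp (Complex.I*w) * Complex.exp (w*Complex.I) = Complex.exp (2*Complex.I*w) := by
    rw [← Complex.exp_add]; ring_nf
  have h2 : Complex.exp (Complex.I*w) * Complex.exp (-w*Complex.I) = 1 := by
    rw [← Complex.exp_add]
    have : Complex.I*w + -w*Complex.I = 0 := by ring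
    rw [this, Complex.exp_zero]
  have hI : Complex.I * Complex.I = -1 := Complex.I_mul_I
  linear_combination -h1 + h2 + (Complex.exp (Complex.I*w) * (Complex.exp (w*Complex.I) - Complex.exp (-w*Complex.I))) * hI

lemma geom_sin (x : ℝ) (hx : Real.sin x ≠ 0) (p : ℕ) :
    ∑ j : Fin p, Complex.exp (2*Complex.I*(x:ℂ)*(j:ℕ)) =
      Complex.exp (Complex.I*(x:ℂ)*((p:ℂ)-1)) * ((Real.sin (p*x) : ℝ) / (Real.sin x : ℝ) : ℝ) := by
  have hxC : (Real.sin x : ℂ) ≠ 0 := by exact_mod_cast hx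
  have hr1 : Complex.exp (2*Complex.I*(x:ℂ)) ≠ 1 := by
    intro h
    rw [Complex.exp_eq_one_iff] at h
    obtain ⟨n, hn⟩ := h
    apply hx
    have hxn : (x:ℂ) = (n:ℂ) * Real.pi := by
      linear_combination hn * (-Complex.I/2) + ((x:ℂ) - (n:ℂ)*(Real.pi:ℂ)) * Complex.I_mul_I
    have : x = n * Real.pi := by exact_mod_cast hxn
    rw [this, Real.sin_int_mul_pi]
  have hsum : ∑ j : Fin p, Complex.exp (2*Complex.I*(x:ℂ)*(j:ℕ)) =
      ∑ j ∈ Finset.range p, Complex.exp (2*Complex.I*(x:ℂ)) ^ j := by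
    rw [Finset.sum_range fun j => Complex.exp (2*Complex.I*(x:ℂ)) ^ j]
    refine Finset.sum_congr rfl fun j _ => ?_
    rw [← Complex.exp_nat_mul]
    congr 1
    ring
  rw [hsum, geom_sum_eq hr1, ← Complex.exp_nat_mul]
  have hnum : Complex.exp ((p:ℂ) * (2*Complex.I*(x:ℂ))) - 1 =
      Complex.exp (Complex.I*((x:ℂ)*p)) * (2*Complex.I*Complex.sin ((x:ℂ)*p)) := by
    have := exp_two_sub_one ((x:ℂ)*p)
    rw [show (p:ℂ) * (2*Complex.I*(x:ℂ)) = 2*Complex.I*((x:ℂ)*p) by ring]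
    exact this
  have hden : Complex.exp (2*Complex.I*(x:ℂ)) - 1 =
      Complex.exp (Complex.I*(x:ℂ)) * (2*Complex.I*Complex.sin (x:ℂ)) := by
    have := exp_two_sub_one (x:ℂ)
    rw [show 2*Complex.I*(x:ℂ) = 2*Complex.I*(x:ℂ) by ring]
    exact this
  rw [hnum, hden]
  have hsin1 : Complex.sin (x:ℂ) = (Real.sin x : ℂ) := by rw [← Complex.ofReal_sin]
  have hsinp : Complex.sin ((x:ℂ)*p) = (Real.sin (p*x) : ℂ) := by
    rw [Complex.ofReal_sin]
    congr 1
    push_cast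
    ring
  rw [hsin1, hsinp]
  have hexp : Complex.exp (Complex.I*((x:ℂ)*p)) =
      Complex.exp (Complex.I*(x:ℂ)*((p:ℂ)-1)) * Complex.exp (Complex.I*(x:ℂ)) := by
    rw [← Complex.exp_add]; ring_nf
  rw [hexp]
  have hexpne : Complex.exp (Complex.I*(x:ℂ)) ≠ 0 := Complex.exp_ne_zero _
  have hpc : ((Real.sin (p*x) / Real.sin x : ℝ) : ℂ) = (Real.sin (p*x) : ℂ) / (Real.sin x : ℂ) := by
    push_cast; ring
  rw [hpc]
  have hd : Complex.exp (Complex.I*(x:ℂ)) * (2*Complex.I*(Real.sin x : ℂ)) ≠ 0 :=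
    mul_ne_zero hexpne (mul_ne_zero (mul_ne_zero two_ne_zero Complex.I_ne_zero) hxC)
  rw [div_eq_iff hd]
  have hcan : ((Real.sin (↑p*x) : ℂ) / (Real.sin x : ℂ)) * (Real.sin x : ℂ) = (Real.sin (↑p*x) : ℂ) :=
    div_mul_cancel₀ _ hxC
  linear_combination (-(Complex.exp (Complex.I*(x:ℂ)*((p:ℂ)-1)) * Complex.exp (Complex.I*(x:ℂ)) * (2*Complex.I))) * hcan

lemma sin_ne_aux (N : ℕ) (hN : 0 < N) (d : ℝ) (hd0 : d ≠ 0) (hd : |d| < N) :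
    Real.sin (Real.pi * d / N) ≠ 0 := by
  intro h
  rw [Real.sin_eq_zero_iff] at h
  obtain ⟨n, hn⟩ := h
  have hNr : (0:ℝ) < N := by exact_mod_cast hN
  have hπ : Real.pi ≠ 0 := Real.pi_ne_zero
  have hNne : (N:ℝ) ≠ 0 := ne_of_gt hNr
  rw [eq_div_iff hNne] at hn
  have hdn : d = n * N :=
    mul_left_cancel₀ hπ (by linear_combination -hn)
  have hn0 : n ≠ 0 := by
    rintro rfl; simp at hdn; exact hd0 hdn
  have : (1:ℝ) ≤ |(n:ℝ)| := by
    have : (1:ℤ) ≤ |n| := Int.one_le_abs hn0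
    exact_mod_cast this
  rw [hdn, abs_mul, abs_of_pos hNr] at hd
  nlinarith


lemma entry_eq (N p q : ℕ) (hN : 0 < N) (hqN : q ≤ N) (k l : Fin q) :
    ((fourierA N p q)ᴴ * fourierA N p q) k l =
      Complex.exp (Complex.I * ((Real.pi * (((k:ℕ):ℝ) - ((l:ℕ):ℝ)) / N : ℝ) : ℂ) * ((p:ℂ)-1)) *
        ((prolateS N p q k l : ℝ) : ℂ) := by
  have hNne : (N:ℝ) ≠ 0 := by positivity
  set x : ℝ := Real.pi * (((k:ℕ):ℝ) - ((l:ℕ):ℝ)) / N with hxdef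
  have hterm : ∀ j : Fin p, star (fourierA N p q j k) * fourierA N p q j l =
      Complex.exp (2*Complex.I*(x:ℂ)*((j:ℕ):ℂ)) := by
    intro j
    show star (omegaN N ^ (-(((j:ℕ) * (k:ℕ) : ℕ) : ℤ))) * omegaN N ^ (-(((j:ℕ) * (l:ℕ) : ℕ) : ℤ)) = _
    rw [show omegaN N = Complex.exp (2 * Real.pi * Complex.I / N) from rfl]
    rw [← Complex.exp_int_mul, ← Complex.exp_int_mul]
    rw [show ∀ z : ℂ, star (Complex.exp z) = Complex.exp ((starRingEnd ℂ) z) from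
      fun z => (Complex.exp_conj z).symm]
    rw [← Complex.exp_add]
    congr 1
    simp only [_root_.map_mul, map_div₀, map_intCast, map_natCast, map_ofNat, Complex.conj_I,
      Complex.conj_ofReal]
    rw [hxdef]
    push_cast
    field_simp
    ring
  rw [Matrix.mul_apply]
  simp only [Matrix.conjTranspose_apply]
  rw [Finset.sum_congr rfl fun j _ => hterm j]
  by_cases hkl : k = l
  · subst hkl
    have hx0 : x = 0 := by rw [hxdef]; simp
    rw [hx0]
    simp [prolateS]
  · have hvne : ((k:ℕ):ℝ) - ((l:ℕ):ℝ) ≠ 0 := by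
      simp only [ne_eq, sub_eq_zero]
      exact_mod_cast fun h => hkl (Fin.ext (by exact_mod_cast h))
    have habs : |((k:ℕ):ℝ) - ((l:ℕ):ℝ)| < N := by
      have h1 : ((k:ℕ):ℝ) < N := by
        have : (k:ℕ) < N := lt_of_lt_of_le k.isLt hqN; exact_mod_cast this
      have h2 : ((l:ℕ):ℝ) < N := by
        have : (l:ℕ) < N := lt_of_lt_of_le l.isLt hqN; exact_mod_cast this
      have h3 : (0:ℝ) ≤ ((k:ℕ):ℝ) := Nat.cast_nonneg _
      have h4 : (0:ℝ) ≤ ((l:ℕ):ℝ) := Nat.cast_nonneg _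
      rw [abs_lt]; constructor <;> linarith
    have hsx : Real.sin x ≠ 0 := by rw [hxdef]; exact sin_ne_aux N hN _ hvne habs
    rw [geom_sin x hsx p]
    congr 1
    rw [prolateS]
    simp only [if_neg hkl]
    push_cast
    congr 2
    · rw [hxdef]; push_cast; ring
    · rw [hxdef]; push_cast; ring


/-- If `S(p,q) ṽ = λ ṽ` then the vector `v` with `v_k = exp(iπ(k-1)(p-1)/N) ṽ_k`
satisfies `A* A v = λ v`: it is (after normalization) a right singular vector of `A`
with singular value `√λ`. -/
theorem right_singular_vector_of_prolate_eigenvector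
    (N p q : ℕ) (hN : 0 < N) (hp1 : 1 ≤ p) (hpN : p ≤ N) (hq1 : 1 ≤ q) (hqN : q ≤ N)
    (vt : Fin q → ℝ) (lam : ℝ)
    (hSv : (prolateS N p q).mulVec vt = lam • vt) :
    ((fourierA N p q)ᴴ * fourierA N p q).mulVec
        (fun k : Fin q => Complex.exp ((Real.pi : ℂ) * Complex.I * ((k : ℕ) : ℂ) *
          ((p : ℂ) - 1) / (N : ℂ)) * (vt k : ℂ)) =
      (lam : ℂ) • (fun k : Fin q => Complex.exp ((Real.pi : ℂ) * Complex.I * ((k : ℕ) : ℂ) *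
          ((p : ℂ) - 1) / (N : ℂ)) * (vt k : ℂ)) := by
  have hNC : (N:ℂ) ≠ 0 := Nat.cast_ne_zero.mpr hN.ne'
  funext k
  have hSk := congrFun hSv k
  simp only [Matrix.mulVec, dotProduct, Pi.smul_apply, smul_eq_mul] at hSk ⊢
  have hterm : ∀ l : Fin q,
      ((fourierA N p q)ᴴ * fourierA N p q) k l *
        (Complex.exp ((Real.pi : ℂ) * Complex.I * ((l : ℕ) : ℂ) * ((p : ℂ) - 1) / (N : ℂ)) *
          (vt l : ℂ)) =
      Complex.exp ((Real.pi : ℂ) * Complex.I * ((k : ℕ) : ℂ) * ((p : ℂ) - 1) / (N : ℂ)) *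
        ((prolateS N p q k l * vt l : ℝ) : ℂ) := by
    intro l
    rw [entry_eq N p q hN hqN k l]
    have hE : Complex.exp (Complex.I * ((Real.pi * (((k:ℕ):ℝ) - ((l:ℕ):ℝ)) / N : ℝ) : ℂ) *
          ((p:ℂ)-1)) *
        Complex.exp ((Real.pi : ℂ) * Complex.I * ((l : ℕ) : ℂ) * ((p : ℂ) - 1) / (N : ℂ)) =
        Complex.exp ((Real.pi : ℂ) * Complex.I * ((k : ℕ) : ℂ) * ((p : ℂ) - 1) / (N : ℂ)) := by
      rw [← Complex.exp_add]
      congr 1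
      push_cast
      field_simp
      ring
    calc _ = (Complex.exp (Complex.I * ((Real.pi * (((k:ℕ):ℝ) - ((l:ℕ):ℝ)) / N : ℝ) : ℂ) *
          ((p:ℂ)-1)) *
        Complex.exp ((Real.pi : ℂ) * Complex.I * ((l : ℕ) : ℂ) * ((p : ℂ) - 1) / (N : ℂ))) *
          (((prolateS N p q k l : ℝ) : ℂ) * (vt l : ℂ)) := by ring
      _ = _ := by rw [hE]; push_cast; ring
  rw [Finset.sum_congr rfl fun l _ => hterm l, ← Finset.mul_sum, ← Complex.ofReal_sum, hSk]
  push_cast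
  ring
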